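/- Let v_1,...,v_m ∈ ℤⁿ be integer vectors each satisfying |v_j|_1 ≤ 2 (sum of absolute values of coordinates at most 2). Then for every odd integer q ≥ 3 and every a ∈ (1/q)ℤⁿ, there exists x ∈ ℤⁿ with |⟨a - x, v_j⟩| < 1 for all j. In particular, the open region { u ∈ ℝⁿ : |⟨u, v_j⟩| < 1 ∀j } contains the open cube (-1/2, 1/2)ⁿ and hence a representative of every class in (1/q)ℤⁿ/ℤⁿ for odd q. -/

import Mathlib

lemma round_strict (q : ℕ) (hq : 3 ≤ q) (hodd : Odd q) (k : ℤ) :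
    |(k : ℝ) / q - round ((k : ℝ) / q)| < 1 / 2 := by
  set x : ℝ := (k : ℝ) / q with hx
  have hq0 : (0 : ℝ) < q := by positivity
  have hle : |x - round x| ≤ 1 / 2 := abs_sub_round x
  rcases lt_or_eq_of_le hle with h | h
  · exact h
  · exfalso
    rcases (abs_eq (by norm_num : (0:ℝ) ≤ 1/2)).mp h with h | h
    · have : (2 * k : ℝ) = 2 * q * round x + q := by
        have hxq : x * q = k := by rw [hx, div_mul_cancel₀ _ hq0.ne']
        linear_combination 2 * (q:ℝ) * h - 2 * hxq
      have hz : (2 * k : ℤ) = 2 * q * round x + q := by exact_mod_cast this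
      have hev : Even (q : ℤ) := ⟨k - q * round x, by linarith⟩
      exact (Nat.not_odd_iff_even.mpr (by exact_mod_cast hev)) hodd
    · have : (2 * k : ℝ) = 2 * q * round x - q := by
        have hxq : x * q = k := by rw [hx, div_mul_cancel₀ _ hq0.ne']
        linear_combination 2 * (q:ℝ) * h - 2 * hxq
      have hz : (2 * k : ℤ) = 2 * q * round x - q := by exact_mod_cast this
      have hev : Even (q : ℤ) := ⟨q * round x - k, by linarith⟩
      exact (Nat.not_odd_iff_even.mpr (by exact_mod_cast hev)) hodd

/-- Proposition 6.2: If each `v j ∈ ℤⁿ` has ℓ¹-norm at most 2 (binet),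
then for every odd `q ≥ 3` each class of `(1/q)ℤⁿ/ℤⁿ` has a representative in the open
polytope `{u : |⟨u, v j⟩| < 1 ∀ j}`; moreover this polytope contains the open cube
`(-1/2, 1/2)ⁿ`. -/
theorem stmt7 (n m : ℕ) (v : Fin m → Fin n → ℤ)
    (hbinet : ∀ j, ∑ i, |v j i| ≤ 2) :
    (∀ u : Fin n → ℝ, (∀ i, |u i| < 1 / 2) →
      ∀ j, |∑ i, u i * (v j i : ℝ)| < 1) ∧
    ∀ q : ℕ, 3 ≤ q → Odd q →
      ∀ a : Fin n → ℝ, (∀ i, ∃ k : ℤ, a i = (k : ℝ) / q) →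
        ∃ x : Fin n → ℤ, ∀ j, |∑ i, (a i - (x i : ℝ)) * (v j i : ℝ)| < 1 := by
  have h1 : ∀ u : Fin n → ℝ, (∀ i, |u i| < 1 / 2) →
      ∀ j, |∑ i, u i * (v j i : ℝ)| < 1 := by
    intro u hu j
    have hle : |∑ i, u i * (v j i : ℝ)| ≤ ∑ i, |u i| * |(v j i : ℝ)| := by
      calc |∑ i, u i * (v j i : ℝ)| ≤ ∑ i, |u i * (v j i : ℝ)| :=
            Finset.abs_sum_le_sum_abs _ _
        _ = ∑ i, |u i| * |(v j i : ℝ)| := by simp [abs_mul]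
    have hcast : (∑ i, |(v j i : ℝ)|) ≤ 2 := by exact_mod_cast hbinet j
    by_cases hz : ∀ i, v j i = 0
    · simp [hz]
    · push_neg at hz
      obtain ⟨i0, hi0⟩ := hz
      have hlt : ∑ i, |u i| * |(v j i : ℝ)| < ∑ i, (1/2) * |(v j i : ℝ)| := by
        apply Finset.sum_lt_sum
        · intro i _
          exact mul_le_mul_of_nonneg_right (hu i).le (abs_nonneg _)
        · refine ⟨i0, Finset.mem_univ _, ?_⟩
          apply mul_lt_mul_of_pos_right (hu i0)
          exact abs_pos.mpr (Int.cast_ne_zero.mpr hi0)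
      have hsum : ∑ i, (1/2 : ℝ) * |(v j i : ℝ)| ≤ 1 := by
        rw [← Finset.mul_sum]; linarith
      linarith
  refine ⟨h1, ?_⟩
  intro q hq hodd a ha
  refine ⟨fun i => round (a i), fun j => ?_⟩
  apply h1
  intro i
  obtain ⟨k, hk⟩ := ha i
  show |a i - (round (a i) : ℝ)| < 1 / 2
  rw [hk]
  exact round_strict q hq hodd k
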